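/- The motion of a finite vertex-transitive graph is never an odd prime; that is, if Γ is a finite vertex-transitive graph and p is an odd prime, then μ(Γ) ≠ p. -/

import Mathlib

open Equiv Pointwise

/-- A graph is vertex-transitive if its automorphism group is transitive on the
vertices. -/
def IsVertexTransitive {V : Type*} (Γ : SimpleGraph V) : Prop :=
  ∀ u v : V, ∃ e : Γ ≃g Γ, e u = v

/-- The motion of a graph: the least number of vertices moved by a non-identity
automorphism (i.e. the minimal degree of its automorphism group). -/
noncomputable def motion {V : Type*} [Fintype V] [DecidableEq V] (Γ : SimpleGraph V) : ℕ :=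
  sInf {n | ∃ e : Γ ≃g Γ, (e.toEquiv : Equiv.Perm V) ≠ 1 ∧
    (Equiv.Perm.support (e.toEquiv : Equiv.Perm V)).card = n}

section AuxMotion

variable {V : Type} [Fintype V] [DecidableEq V] (Γ : SimpleGraph V)

/-- The automorphisms of `Γ`, as a subgroup of the permutation group of `V`. -/
def autSubgroup : Subgroup (Equiv.Perm V) where
  carrier := {π | ∀ u v : V, Γ.Adj (π u) (π v) ↔ Γ.Adj u v}
  one_mem' := fun _ _ => Iff.rfl
  mul_mem' := fun {a b} ha hb u v => (ha (b u) (b v)).trans (hb u v)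
  inv_mem' := fun {a} ha u v => by
    have h := ha (a⁻¹ u) (a⁻¹ v)
    simp only [show ∀ x, a (a⁻¹ x) = x from fun x => a.apply_symm_apply x] at h
    exact h.symm

lemma motion_le {π : Equiv.Perm V} (hmem : π ∈ autSubgroup Γ) (hne : π ≠ 1) :
    motion Γ ≤ π.support.card :=
  Nat.sInf_le ⟨⟨π, hmem _ _⟩, hne, rfl⟩

end AuxMotion

/-- The motion of a finite vertex-transitive graph is never an odd
prime. -/
theorem statement_3 {V : Type} [Fintype V] [DecidableEq V] (Γ : SimpleGraph V)
    (hvt : IsVertexTransitive Γ) (p : ℕ) (hp : p.Prime) (hodd : Odd p) :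
    motion Γ ≠ p := by
  intro hm
  haveI : NeZero p := ⟨hp.ne_zero⟩
  -- the defining set is nonempty
  have hS : {n | ∃ e : Γ ≃g Γ, (e.toEquiv : Equiv.Perm V) ≠ 1 ∧
      (Equiv.Perm.support (e.toEquiv : Equiv.Perm V)).card = n}.Nonempty := by
    by_contra h
    rw [Set.not_nonempty_iff_eq_empty] at h
    rw [motion, h, Nat.sInf_empty] at hm
    exact hp.ne_zero hm.symm
  have hp_mem := Nat.sInf_mem hS
  rw [show sInf _ = motion Γ from rfl, hm] at hp_mem
  obtain ⟨e, hne, hcard⟩ := hp_mem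
  set π : Equiv.Perm V := (e.toEquiv : Equiv.Perm V) with hπdef
  have hπmem : π ∈ autSubgroup Γ := fun u v => e.map_adj_iff
  -- replace π by a power of prime order q
  have hord_ne : orderOf π ≠ 1 := fun h => hne (orderOf_eq_one_iff.mp h)
  have hord_pos : 0 < orderOf π := orderOf_pos π
  set q := (orderOf π).minFac with hqdef
  have hq : q.Prime := Nat.minFac_prime hord_ne
  have hqdvd : q ∣ orderOf π := Nat.minFac_dvd _
  set y : Equiv.Perm V := π ^ (orderOf π / q) with hydef
  have hymem : y ∈ autSubgroup Γ := pow_mem hπmem _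
  have hyq : y ^ q = 1 := by
    rw [hydef, ← pow_mul, Nat.div_mul_cancel hqdvd, pow_orderOf_eq_one]
  have hyne : y ≠ 1 := by
    intro h
    have hdvd : orderOf π ∣ orderOf π / q := orderOf_dvd_of_pow_eq_one h
    have hlt : orderOf π / q < orderOf π :=
      Nat.div_lt_self hord_pos hq.one_lt
    have hpos : 0 < orderOf π / q := Nat.div_pos (Nat.minFac_le hord_pos) hq.pos
    exact absurd (Nat.le_of_dvd hpos hdvd) (not_le.mpr hlt)
  -- support of y has cardinality exactly p
  have hsub : y.support ⊆ π.support := Equiv.Perm.support_pow_le π _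
  have hyc1 : y.support.card ≤ p := hcard ▸ Finset.card_le_card hsub
  have hyc2 : p ≤ y.support.card := hm ▸ motion_le Γ hymem hyne
  have hAcard : y.support.card = p := le_antisymm hyc1 hyc2
  -- y is a p-cycle
  have horddvd : orderOf y ∣ q := orderOf_dvd_of_pow_eq_one hyq
  have hctq : ∀ n ∈ y.cycleType, n = q := by
    intro n hn
    have h2 : 2 ≤ n := Equiv.Perm.two_le_of_mem_cycleType hn
    have hd : n ∣ q := (Equiv.Perm.dvd_of_mem_cycleType hn).trans horddvd
    exact (hq.eq_one_or_self_of_dvd n hd).resolve_left (by omega)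
  have hsum : y.cycleType.sum = p := by rw [Equiv.Perm.sum_cycleType, hAcard]
  have hrep : y.cycleType = Multiset.replicate (Multiset.card y.cycleType) q :=
    Multiset.eq_replicate_card.mpr hctq
  have hqcard : Multiset.card y.cycleType * q = p := by
    rw [hrep, Multiset.sum_replicate, smul_eq_mul] at hsum
    exact hsum
  have hqp : q = p := by
    have hdvd : q ∣ p := Dvd.intro_left _ hqcard
    exact (Nat.Prime.eq_one_or_self_of_dvd hp q hdvd).resolve_left hq.ne_one
  have hcard1 : Multiset.card y.cycleType = 1 := by
    have h2 := hqcard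
    rw [hqp] at h2
    apply Nat.eq_of_mul_eq_mul_right hp.pos
    rw [one_mul]
    exact h2
  have hcyc : y.IsCycle := Equiv.Perm.card_cycleType_eq_one.mp hcard1
  have hOn : y.IsCycleOn (y.support : Set V) := by
    rw [Equiv.Perm.coe_support_eq_set_support]
    exact hcyc.isCycleOn
  -- pick a base point and parametrize the support by ZMod p
  have hApos : 0 < y.support.card := by rw [hAcard]; exact hp.pos
  obtain ⟨a0, ha0⟩ := Finset.card_pos.mp hApos
  set φ : ZMod p → V := fun i => (y ^ i.val) a0 with hφdef
  have hφA : ∀ i, φ i ∈ y.support := fun i =>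
    Equiv.Perm.pow_apply_mem_support.mpr ha0
  have hφinj : Function.Injective φ := by
    intro i j hij
    have := (hOn.pow_apply_eq_pow_apply ha0).mp hij
    rw [hAcard] at this
    have h2 : ((i.val : ZMod p)) = (j.val : ZMod p) :=
      (ZMod.natCast_eq_natCast_iff _ _ _).mpr this
    rwa [ZMod.natCast_zmod_val, ZMod.natCast_zmod_val] at h2
  have hφ0 : φ 0 = a0 := by
    simp [hφdef, ZMod.val_zero]
  have hadd : ∀ (k i : ZMod p), (y ^ k.val) (φ i) = φ (i + k) := by
    intro k i
    show (y ^ k.val) ((y ^ i.val) a0) = (y ^ (i + k).val) a0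
    rw [← Equiv.Perm.mul_apply, ← pow_add]
    refine (hOn.pow_apply_eq_pow_apply ha0).mpr ?_
    rw [hAcard]
    have : (i + k).val = (i.val + k.val) % p := ZMod.val_add i k
    calc k.val + i.val ≡ i.val + k.val [MOD p] := by rw [Nat.add_comm]
      _ ≡ (i.val + k.val) % p [MOD p] := (Nat.mod_modEq _ _).symm
      _ = (i + k).val := this.symm
  -- key translation lemma
  have hkey : ∀ i j : ZMod p, Γ.Adj (φ i) (φ j) ↔ Γ.Adj a0 (φ (j - i)) := by
    intro i j
    have hmemk : (y ^ ((-i).val)) ∈ autSubgroup Γ := pow_mem hymem _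
    have h := hmemk (φ i) (φ j)
    rw [hadd, hadd] at h
    rw [show i + -i = 0 by ring, show j + -i = j - i by ring, hφ0] at h
    exact h.symm
  -- adjacency only depends on difference up to sign
  have hsymm : ∀ k : ZMod p, Γ.Adj a0 (φ k) ↔ Γ.Adj a0 (φ (-k)) := by
    intro k
    rw [Γ.adj_comm a0 (φ k), show a0 = φ 0 from hφ0.symm, hkey k 0,
      show (0 : ZMod p) - k = -k by ring, hφ0]
  -- vertices outside the support see all of the support identically
  have houtside : ∀ w ∉ y.support, ∀ i j : ZMod p, Γ.Adj (φ i) w ↔ Γ.Adj (φ j) w := by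
    intro w hw i j
    have hmemk : (y ^ ((j - i).val)) ∈ autSubgroup Γ := pow_mem hymem _
    have h := hmemk (φ i) w
    have hwfix : (y ^ ((j - i).val)) w = w := by
      apply Equiv.Perm.notMem_support.mp
      exact fun hmem => hw (Equiv.Perm.support_pow_le y _ hmem)
    rw [hadd, hwfix, show i + (j - i) = j by ring] at h
    exact h.symm
  -- the "inversion" permutation
  set φ' : ZMod p → {x // x ∈ y.support} := fun i => ⟨φ i, hφA i⟩ with hφ'def
  have hφ'bij : Function.Bijective φ' := by
    constructor
    · intro i j hij
      exact hφinj (congrArg Subtype.val hij)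
    · rintro ⟨b, hb⟩
      obtain ⟨n, hn, hnb⟩ := hOn.exists_pow_eq ha0 hb
      refine ⟨(n : ZMod p), ?_⟩
      apply Subtype.ext
      show φ (n : ZMod p) = b
      rw [hφdef]
      simp only []
      rw [ZMod.val_natCast, Nat.mod_eq_of_lt (by rwa [hAcard] at hn)]
      exact hnb
  set ψ : ZMod p ≃ {x // x ∈ y.support} := Equiv.ofBijective φ' hφ'bij with hψdef
  have hψ_apply : ∀ i, (ψ i : V) = φ i := fun i => rfl
  have hψsymm : ∀ (i : ZMod p) (h : φ i ∈ y.support), ψ.symm ⟨φ i, h⟩ = i := by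
    intro i h
    have : (⟨φ i, h⟩ : {x // x ∈ y.support}) = ψ i := rfl
    rw [this, Equiv.symm_apply_apply]
  set σf : V → V := fun b => if h : b ∈ y.support then φ (-(ψ.symm ⟨b, h⟩)) else b
    with hσfdef
  have hσf_phi : ∀ i : ZMod p, σf (φ i) = φ (-i) := by
    intro i
    rw [hσfdef]
    simp only [dif_pos (hφA i)]
    rw [hψsymm i (hφA i)]
  have hσf_out : ∀ b, b ∉ y.support → σf b = b := by
    intro b hb
    rw [hσfdef]
    simp only [dif_neg hb]
  have hσf_inv : Function.Involutive σf := by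
    intro b
    by_cases h : b ∈ y.support
    · have hb : b = φ (ψ.symm ⟨b, h⟩) := by
        have := ψ.apply_symm_apply ⟨b, h⟩
        exact (congrArg Subtype.val this).symm
      calc σf (σf b) = σf (σf (φ (ψ.symm ⟨b, h⟩))) := by rw [← hb]
        _ = σf (φ (-(ψ.symm ⟨b, h⟩))) := by rw [hσf_phi]
        _ = φ (-(-(ψ.symm ⟨b, h⟩))) := hσf_phi _
        _ = b := by rw [neg_neg, ← hb]
    · rw [hσf_out b h, hσf_out b h]
  set σ : Equiv.Perm V := hσf_inv.toPerm with hσdef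
  have hσ_apply : ∀ b, σ b = σf b := fun b => rfl
  -- σ is an automorphism
  have hσmem : σ ∈ autSubgroup Γ := by
    intro u v
    rw [hσ_apply, hσ_apply]
    by_cases hu : u ∈ y.support <;> by_cases hv : v ∈ y.support
    · -- both in support
      obtain ⟨i, hi⟩ : ∃ i, φ i = u := ⟨ψ.symm ⟨u, hu⟩, by
        have := ψ.apply_symm_apply ⟨u, hu⟩
        exact congrArg Subtype.val this⟩
      obtain ⟨j, hj⟩ : ∃ j, φ j = v := ⟨ψ.symm ⟨v, hv⟩, by
        have := ψ.apply_symm_apply ⟨v, hv⟩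
        exact congrArg Subtype.val this⟩
      subst hi; subst hj
      rw [hσf_phi, hσf_phi, hkey, hkey,
        show -j - -i = -(j - i) by ring, ← hsymm]
    · -- u in support, v not
      obtain ⟨i, hi⟩ : ∃ i, φ i = u := ⟨ψ.symm ⟨u, hu⟩, by
        have := ψ.apply_symm_apply ⟨u, hu⟩
        exact congrArg Subtype.val this⟩
      subst hi
      rw [hσf_phi, hσf_out v hv, Γ.adj_comm (φ (-i)) v, Γ.adj_comm (φ i) v,
        ← Γ.adj_comm (φ (-i)) v, ← Γ.adj_comm (φ i) v]
      exact houtside v hv (-i) i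
    · -- v in support, u not
      obtain ⟨j, hj⟩ : ∃ j, φ j = v := ⟨ψ.symm ⟨v, hv⟩, by
        have := ψ.apply_symm_apply ⟨v, hv⟩
        exact congrArg Subtype.val this⟩
      subst hj
      rw [hσf_phi, hσf_out u hu, Γ.adj_comm u (φ (-j)), Γ.adj_comm u (φ j)]
      exact houtside u hu (-j) j
    · rw [hσf_out u hu, hσf_out v hv]
  -- σ is nontrivial
  have hp3 : 3 ≤ p := by
    rcases hodd with ⟨k, hk⟩
    have := hp.two_le
    omega
  have hne1 : (-1 : ZMod p) ≠ 1 := by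
    intro h
    have h2 : ((2 : ℕ) : ZMod p) = 0 := by
      push_cast
      linear_combination -h
    have := (ZMod.natCast_eq_zero_iff 2 p).mp h2
    have := Nat.le_of_dvd (by norm_num) this
    omega
  have hσne : σ ≠ 1 := by
    intro h
    have h1 : σ (φ 1) = φ 1 := by rw [h]; rfl
    rw [hσ_apply, hσf_phi] at h1
    exact hne1 (hφinj h1)
  -- but σ has support of size < p
  have hσsupp : σ.support ⊆ y.support.erase a0 := by
    intro b hb
    have hbne : σ b ≠ b := Equiv.Perm.mem_support.mp hb
    have hbA : b ∈ y.support := by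
      by_contra hbn
      exact hbne (hσf_out b hbn)
    refine Finset.mem_erase.mpr ⟨?_, hbA⟩
    intro hba0
    subst hba0
    apply hbne
    rw [hσ_apply, ← hφ0, hσf_phi, neg_zero]
  have hle : p ≤ σ.support.card := hm ▸ motion_le Γ hσmem hσne
  have hlt : σ.support.card ≤ p - 1 := by
    have := Finset.card_le_card hσsupp
    rwa [Finset.card_erase_of_mem ha0, hAcard] at this
  omega
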